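/- Let f : ℝ^q → ℝ be given by f(x) = Σ_{i=1}^q h₂(x_i) where h₂ is the second-order Huber function, and let b ≥ 1 with q = ⌊b⌋. Then any maximizer x⁺ of ‖∇f(x)‖² subject to f(x) = b satisfies ∇f(x⁺) = (±1,...,±1) and ∇²f(x⁺) = 0; in particular the gradient direction at x⁺ is not a Newton direction. -/

import Mathlib

open Set Filter

/-- The second-order Huber function. -/
noncomputable def h2 (x : ℝ) : ℝ :=
  if |x| < 1 then -x ^ 4 / 8 + 3 * x ^ 2 / 4 + 3 / 8 else |x|

/-- derivative of h2 -/
noncomputable def hg (x : ℝ) : ℝ :=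
  if |x| < 1 then (3 * x - x ^ 3) / 2 else if 0 < x then 1 else -1

lemma h2_even (x : ℝ) : h2 (-x) = h2 x := by
  unfold h2; rw [abs_neg]; split_ifs <;> ring_nf

lemma hg_odd (x : ℝ) (hx : x ≠ 0) : hg (-x) = -hg x := by
  unfold hg; rw [abs_neg]
  by_cases h : |x| < 1
  · rw [if_pos h, if_pos h]; ring
  · rw [if_neg h, if_neg h]
    rcases hx.lt_or_gt with h1 | h1
    · rw [if_pos (by linarith), if_neg (by linarith)]; norm_num
    · rw [if_neg (by linarith), if_pos h1]

lemma hg_one : hg 1 = 1 := by norm_num [hg, abs_one]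

lemma h2_one : h2 1 = 1 := by norm_num [h2, abs_one]

lemma hp_hasDerivAt (x : ℝ) :
    HasDerivAt (fun y : ℝ => -y ^ 4 / 8 + 3 * y ^ 2 / 4 + 3 / 8) ((3 * x - x ^ 3) / 2) x := by
  have := ((hasDerivAt_pow 4 x).neg.div_const 8).add
    (((hasDerivAt_pow 2 x).const_mul 3).div_const 4) |>.add_const ((3:ℝ)/8)
  refine this.congr_deriv ?_
  push_cast; ring

lemma h2_eq_inside {y : ℝ} (h : |y| < 1) : h2 y = -y ^ 4 / 8 + 3 * y ^ 2 / 4 + 3 / 8 := by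
  simp [h2, h]

lemma h2_eq_outside {y : ℝ} (h : 1 ≤ |y|) : h2 y = |y| := by
  simp [h2, not_lt.2 h]

lemma hasDerivAt_h2_inside {x : ℝ} (h : |x| < 1) : HasDerivAt h2 ((3 * x - x ^ 3) / 2) x := by
  refine (hp_hasDerivAt x).congr_of_eventuallyEq ?_
  filter_upwards [eventually_abs_sub_lt x (by linarith : (0:ℝ) < 1 - |x|)] with y hy
  have : |y| < 1 := by
    have := abs_sub_abs_le_abs_sub y x
    linarith
  exact h2_eq_inside this

lemma hasDerivAt_h2_one : HasDerivAt h2 1 1 := by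
  have hp1 := hp_hasDerivAt 1
  norm_num [-hasDerivAt_add_const_iff] at hp1
  have h1 : HasDerivWithinAt h2 1 (Iic 1) 1 := by
    refine (hp1.hasDerivWithinAt (s := Iic 1)).congr_of_eventuallyEq ?_ ?_
    swap
    · rw [h2_one]; norm_num
    filter_upwards [mem_nhdsWithin_of_mem_nhds (Ioi_mem_nhds (by norm_num : (0:ℝ) < 1)),
      self_mem_nhdsWithin] with y hy1 hy2
    rcases (mem_Iic.1 hy2).lt_or_eq with hlt | rfl
    · exact h2_eq_inside (abs_lt.2 ⟨by linarith [mem_Ioi.1 hy1], hlt⟩)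
    · rw [h2_one]; norm_num
  have h2' : HasDerivWithinAt h2 1 (Ici 1) 1 := by
    refine (hasDerivWithinAt_id 1 (Ici 1)).congr ?_ (by rw [h2_one]; rfl)
    intro y hy
    have hy1 : (1:ℝ) ≤ y := hy
    show h2 y = y
    rw [h2_eq_outside (by rwa [abs_of_pos (by linarith)]), abs_of_pos (by linarith)]
  have h3 := h1.union h2'
  rwa [Iic_union_Ici, hasDerivWithinAt_univ] at h3

lemma hg_zero : hg 0 = 0 := by norm_num [hg]

lemma hasDerivAt_h2_ge_one {x : ℝ} (hx : 1 ≤ x) : HasDerivAt h2 (hg x) x := by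
  rcases hx.eq_or_lt with rfl | hx'
  · rw [hg_one]; exact hasDerivAt_h2_one
  · have hgx : hg x = 1 := by
      rw [hg, if_neg (by rw [abs_of_pos (by linarith)]; linarith), if_pos (by linarith)]
    rw [hgx]
    refine (hasDerivAt_id x).congr_of_eventuallyEq ?_
    filter_upwards [Ioi_mem_nhds hx'] with y hy
    have hy1 : (1:ℝ) < y := hy
    rw [h2_eq_outside (by rw [abs_of_pos (by linarith)]; linarith), abs_of_pos (by linarith)]
    rfl

lemma hasDerivAt_h2 (x : ℝ) : HasDerivAt h2 (hg x) x := by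
  by_cases h : |x| < 1
  · rw [hg, if_pos h]; exact hasDerivAt_h2_inside h
  · push_neg at h
    rcases le_or_gt 1 x with hx | hx
    · exact hasDerivAt_h2_ge_one hx
    · have hxneg : x < 0 := by
        by_contra hc
        push_neg at hc; rw [abs_of_nonneg hc] at h; linarith
      have hx1 : 1 ≤ -x := by
        rw [abs_of_neg hxneg] at h; linarith
      have hd := (hasDerivAt_h2_ge_one hx1).comp x (hasDerivAt_neg x)
      have heq : (fun y : ℝ => h2 (-y)) = h2 := funext fun y => h2_even y
      rw [show (h2 ∘ fun y => -y) = h2 from heq] at hd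
      refine hd.congr_deriv ?_
      have := hg_odd (-x) (by linarith)
      rw [neg_neg] at this
      rw [this]; ring

lemma hq_hasDerivAt (x : ℝ) :
    HasDerivAt (fun y : ℝ => (3 * y - y ^ 3) / 2) ((3 - 3 * x ^ 2) / 2) x := by
  have := (((hasDerivAt_id x).const_mul 3).sub (hasDerivAt_pow 3 x)).div_const 2
  refine this.congr_deriv ?_
  push_cast; ring

lemma hasDerivAt_hg_one : HasDerivAt hg 0 1 := by
  have hq1 := hq_hasDerivAt 1
  norm_num at hq1
  have h1 : HasDerivWithinAt hg 0 (Iic 1) 1 := by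
    refine (hq1.hasDerivWithinAt (s := Iic 1)).congr_of_eventuallyEq ?_ ?_
    swap
    · rw [hg_one]; norm_num
    filter_upwards [mem_nhdsWithin_of_mem_nhds (Ioi_mem_nhds (by norm_num : (0:ℝ) < 1)),
      self_mem_nhdsWithin] with y hy1 hy2
    rcases (mem_Iic.1 hy2).lt_or_eq with hlt | rfl
    · rw [hg, if_pos (abs_lt.2 ⟨by linarith [mem_Ioi.1 hy1], hlt⟩)]
    · rw [hg_one]; norm_num
  have h2' : HasDerivWithinAt hg 0 (Ici 1) 1 := by
    refine (hasDerivWithinAt_const 1 (Ici 1) 1).congr ?_ (by rw [hg_one])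
    intro y hy
    have hy1 : (1:ℝ) ≤ y := hy
    rw [hg, if_neg (by rw [abs_of_pos (by linarith)]; linarith), if_pos (by linarith)]
  have h3 := h1.union h2'
  rwa [Iic_union_Ici, hasDerivWithinAt_univ] at h3

lemma hasDerivAt_hg_ge_one {x : ℝ} (hx : 1 ≤ x) : HasDerivAt hg 0 x := by
  rcases hx.eq_or_lt with rfl | hx'
  · exact hasDerivAt_hg_one
  · refine (hasDerivAt_const x (1:ℝ)).congr_of_eventuallyEq ?_
    filter_upwards [Ioi_mem_nhds hx'] with y hy
    have hy1 : (1:ℝ) < y := hy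
    rw [hg, if_neg (by rw [abs_of_pos (by linarith)]; linarith), if_pos (by linarith)]

lemma hasDerivAt_hg {x : ℝ} (hx : 1 ≤ |x|) : HasDerivAt hg 0 x := by
  rcases le_or_gt 1 x with h | h
  · exact hasDerivAt_hg_ge_one h
  · have hxneg : x < 0 := by
      by_contra hc; push_neg at hc; rw [abs_of_nonneg hc] at hx; linarith
    have hx1 : 1 ≤ -x := by rw [abs_of_neg hxneg] at hx; linarith
    have hd := ((hasDerivAt_hg_ge_one hx1).comp x (hasDerivAt_neg x)).neg
    have heq : (fun y : ℝ => -hg (-y)) = hg := by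
      funext y
      by_cases hy : y = 0
      · simp [hy, hg_zero]
      · rw [hg_odd y hy]; ring
    have : (-hg ∘ Neg.neg : ℝ → ℝ) = hg := heq
    rw [this] at hd
    refine hd.congr_deriv ?_
    ring

lemma hg_sq_le (x : ℝ) : hg x ^ 2 ≤ 1 := by
  unfold hg
  split_ifs with h h'
  · have hx2 : x ^ 2 ≤ 1 := by nlinarith [abs_nonneg x, sq_abs x, abs_lt.1 h]
    nlinarith [sq_nonneg (1 - x ^ 2), sq_nonneg x]
  · norm_num
  · norm_num

lemma abs_le_of_hg_sq {x : ℝ} (h : hg x ^ 2 = 1) : 1 ≤ |x| := by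
  by_contra hc
  push_neg at hc
  have hx2 : x ^ 2 < 1 := by nlinarith [abs_nonneg x, sq_abs x, abs_lt.1 hc]
  rw [hg, if_pos hc] at h
  nlinarith [sq_nonneg (1 - x ^ 2), sq_nonneg x]

lemma hg_abs_one {x : ℝ} (h : 1 ≤ |x|) : |hg x| = 1 := by
  rw [hg, if_neg (not_lt.2 h)]
  split_ifs with h' <;> norm_num

/-- The gradient vector field. -/
noncomputable def Vg {q : ℕ} (x : EuclideanSpace ℝ (Fin q)) : EuclideanSpace ℝ (Fin q) :=
  (WithLp.equiv 2 (Fin q → ℝ)).symm (fun i => hg (x i))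

lemma Vg_apply {q : ℕ} (x : EuclideanSpace ℝ (Fin q)) (i : Fin q) : Vg x i = hg (x i) := rfl

section Grad

variable {q : ℕ} (f : EuclideanSpace ℝ (Fin q) → ℝ)

lemma f_hasGradient (hf : ∀ x, f x = ∑ i, h2 (x i)) (x : EuclideanSpace ℝ (Fin q)) :
    HasGradientAt f (Vg x) x := by
  rw [hasGradientAt_iff_hasFDerivAt]
  have hL : (InnerProductSpace.toDual ℝ (EuclideanSpace ℝ (Fin q))) (Vg x)
      = ∑ i, hg (x i) • EuclideanSpace.proj i := by
    ext y
    simp only [InnerProductSpace.toDual_apply_apply, PiLp.inner_apply, RCLike.inner_apply,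
      ContinuousLinearMap.sum_apply, ContinuousLinearMap.smul_apply]
    refine Finset.sum_congr rfl fun i _ => ?_
    show y i * hg (x i) = hg (x i) * y i
    exact mul_comm _ _
  rw [hL]
  have : ∀ i : Fin q, HasFDerivAt (fun y : EuclideanSpace ℝ (Fin q) => h2 (y i))
      (hg (x i) • EuclideanSpace.proj (𝕜 := ℝ) i) x := by
    intro i
    have hproj : HasFDerivAt (fun y : EuclideanSpace ℝ (Fin q) => y i)
        (EuclideanSpace.proj (𝕜 := ℝ) i) x :=
      (EuclideanSpace.proj (𝕜 := ℝ) (ι := Fin q) i).hasFDerivAt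
    exact (hasDerivAt_h2 (x i)).comp_hasFDerivAt x hproj
  have hsum := HasFDerivAt.sum (fun i (_ : i ∈ Finset.univ) => this i)
  refine hsum.congr_of_eventuallyEq ?_
  filter_upwards with y
  rw [hf y, Finset.sum_apply]

lemma grad_eq (hf : ∀ x, f x = ∑ i, h2 (x i)) (x : EuclideanSpace ℝ (Fin q)) :
    gradient f x = Vg x :=
  (f_hasGradient f hf x).gradient

end Grad

lemma norm_sq_euclidean {q : ℕ} (y : EuclideanSpace ℝ (Fin q)) :
    ‖y‖ ^ 2 = ∑ i, y i ^ 2 := by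
  rw [EuclideanSpace.norm_eq, Real.sq_sqrt (Finset.sum_nonneg fun i _ => sq_nonneg _)]
  exact Finset.sum_congr rfl fun i _ => by rw [Real.norm_eq_abs, sq_abs]

lemma hessian_zero {q : ℕ} (f : EuclideanSpace ℝ (Fin q) → ℝ)
    (hf : ∀ x, f x = ∑ i, h2 (x i)) (xp : EuclideanSpace ℝ (Fin q))
    (hxp : ∀ i, 1 ≤ |xp i|) : fderiv ℝ (gradient f) xp = 0 := by
  have hG : gradient f = fun x => Vg x :=
    funext fun x => grad_eq f hf x
  rw [hG]
  have hd : HasFDerivAt (fun x : EuclideanSpace ℝ (Fin q) => Vg x)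
      (0 : EuclideanSpace ℝ (Fin q) →L[ℝ] EuclideanSpace ℝ (Fin q)) xp := by
    rw [← hasFDerivWithinAt_univ, hasFDerivWithinAt_piLp 2]
    intro i
    rw [ContinuousLinearMap.comp_zero, hasFDerivWithinAt_univ]
    have hproj : HasFDerivAt (fun y : EuclideanSpace ℝ (Fin q) => y i)
        (EuclideanSpace.proj (𝕜 := ℝ) i) xp :=
      (EuclideanSpace.proj (𝕜 := ℝ) (ι := Fin q) i).hasFDerivAt
    have := (hasDerivAt_hg (hxp i)).comp_hasFDerivAt xp hproj
    rw [zero_smul] at this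
    exact this
  exact hd.fderiv

theorem teleportation_not_newton_direction
    (b : ℝ) (hb : 1 ≤ b) (q : ℕ) (hq : q = ⌊b⌋₊)
    (f : EuclideanSpace ℝ (Fin q) → ℝ)
    (hf : ∀ x, f x = ∑ i, h2 (x i))
    (xp : EuclideanSpace ℝ (Fin q))
    (hfeas : f xp = b)
    (hmax : IsMaxOn (fun x => ‖gradient f x‖ ^ 2) {x | f x = b} xp) :
    (∀ i, |gradient f xp i| = 1) ∧ fderiv ℝ (gradient f) xp = 0 := by
  have hb0 : (0:ℝ) ≤ b := by linarith
  have hq1 : 1 ≤ q := by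
    rw [hq]
    exact Nat.le_floor (by exact_mod_cast hb)
  have hqb : (q : ℝ) ≤ b := by rw [hq]; exact Nat.floor_le hb0
  have hqpos : (0:ℝ) < q := by exact_mod_cast hq1
  set t : ℝ := b / q with ht
  have ht1 : 1 ≤ t := (one_le_div hqpos).2 hqb
  set x0 : EuclideanSpace ℝ (Fin q) := (WithLp.toLp 2 (fun _ => t : Fin q → ℝ) : EuclideanSpace ℝ (Fin q))
    with hx0
  have hfeas0 : f x0 = b := by
    rw [hf]
    have : ∀ i : Fin q, h2 (x0 i) = t := fun i => by
      rw [show x0 i = t from rfl, h2_eq_outside (by rw [abs_of_pos (by linarith)]; exact ht1),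
        abs_of_pos (by linarith)]
    rw [Finset.sum_congr rfl fun i _ => this i, Finset.sum_const, Finset.card_univ,
      Fintype.card_fin, nsmul_eq_mul, ht]
    field_simp
  -- value of ‖∇f‖² at x0 is q
  have hval0 : ‖gradient f x0‖ ^ 2 = q := by
    rw [grad_eq f hf, norm_sq_euclidean]
    simp only [Vg_apply]
    have : ∀ i : Fin q, hg (x0 i) ^ 2 = 1 := fun i => by
      have := hg_abs_one (x := t) (by rw [abs_of_pos (by linarith)]; exact ht1)
      rw [show x0 i = t from rfl, ← sq_abs, this, one_pow]
    rw [Finset.sum_congr rfl fun i _ => this i, Finset.sum_const, Finset.card_univ,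
      Fintype.card_fin, nsmul_eq_mul, mul_one]
  have hkey' := hmax (show x0 ∈ {x | f x = b} from hfeas0)
  have hkey : (q:ℝ) ≤ ∑ i, hg (xp i) ^ 2 := by
    have h1 : ‖gradient f x0‖ ^ 2 ≤ ‖gradient f xp‖ ^ 2 := hkey'
    rw [hval0, grad_eq f hf, norm_sq_euclidean] at h1
    simpa [Vg_apply] using h1
  -- each coordinate squared gradient equals 1
  have hsq : ∀ i, hg (xp i) ^ 2 = 1 := by
    by_contra hc
    push_neg at hc
    obtain ⟨j, hj⟩ := hc
    have hjlt : hg (xp j) ^ 2 < 1 := lt_of_le_of_ne (hg_sq_le _) hj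
    have hlt : ∑ i, hg (xp i) ^ 2 < ∑ _i : Fin q, (1:ℝ) := by
      refine Finset.sum_lt_sum (fun i _ => hg_sq_le _) ⟨j, Finset.mem_univ j, hjlt⟩
    rw [Finset.sum_const, Finset.card_univ, Fintype.card_fin, nsmul_eq_mul, mul_one] at hlt
    linarith
  have habs : ∀ i, 1 ≤ |xp i| := fun i => abs_le_of_hg_sq (hsq i)
  constructor
  · intro i
    rw [grad_eq f hf]
    exact hg_abs_one (habs i)
  · exact hessian_zero f hf xp habs
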